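/- Let p be an odd prime and q = p^s. The binary code of the Type II ℓ=3 graph P(p,s) consists exactly of the zero vector and the all-ones vector; that is, it is the [n, 1, n] binary repetition code of length n = q² + q + 1. -/

import Mathlib

open scoped Classical

namespace TypeII3

/-- Variable nodes of the Type II ℓ=3 graph: the root `r`, the nodes `(x,j)` (j ∈ F, with
`x` a formal symbol), and the nodes `(i,j)` (i, j ∈ F). -/
abbrev VN (F : Type*) := Unit ⊕ (F ⊕ (F × F))

/-- Constraint nodes of the Type II ℓ=3 graph: `c_x`, the nodes `c_i` (i ∈ F), and the
nodes `(a,b)'` (a, b ∈ F). -/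
abbrev CN (F : Type*) := Unit ⊕ (F ⊕ (F × F))

/-- Adjacency of the Type II ℓ=3 graph `P(p,s)`:
`r ~ c_x`; `r ~ c_i`; `c_x ~ (x,j)`; `c_i ~ (i,j)`; `(x,j) ~ (j,b)'` for every `b`; and
`(i,j) ~ (a, j + i·a)'` for every `a`. -/
def adj (F : Type*) [Field F] : VN F → CN F → Prop
  | Sum.inl _, Sum.inl _ => True                             -- r ~ c_x
  | Sum.inl _, Sum.inr (Sum.inl _) => True                   -- r ~ c_i
  | Sum.inl _, Sum.inr (Sum.inr _) => False
  | Sum.inr (Sum.inl _), Sum.inl _ => True                   -- (x,j) ~ c_x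
  | Sum.inr (Sum.inl _), Sum.inr (Sum.inl _) => False
  | Sum.inr (Sum.inl j), Sum.inr (Sum.inr (a, _)) => a = j   -- (x,j) ~ (j,b)'
  | Sum.inr (Sum.inr _), Sum.inl _ => False
  | Sum.inr (Sum.inr (i, _)), Sum.inr (Sum.inl k) => k = i   -- c_i ~ (i,j)
  | Sum.inr (Sum.inr (i, j)), Sum.inr (Sum.inr (a, b)) => b = j + i * a

end TypeII3

/-- Hamming weight of a vector: the number of nonzero coordinates. -/
noncomputable def hamWt {V K : Type*} [Zero K] (x : V → K) : ℕ :=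
  Nat.card {v : V // x v ≠ 0}

namespace TypeII3

/-- The code of the Type II ℓ=3 graph over `K`. -/
def InCode (F : Type*) [Field F] [Fintype F] (K : Type*) [AddCommMonoid K]
    (x : VN F → K) : Prop :=
  ∀ c : CN F, (∑ v : VN F, if adj F v c then x v else 0) = 0

/-- The minimum distance of the code of the Type II ℓ=3 graph over `K`. -/
noncomputable def dmin (F : Type*) [Field F] [Fintype F]
    (K : Type*) [AddCommMonoid K] : ℕ :=
  sInf {w | ∃ x : VN F → K, InCode F K x ∧ x ≠ 0 ∧ hamWt x = w}

end TypeII3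

section Aux

variable {F : Type*} [Field F] [Fintype F]

open TypeII3

private lemma sumA (x : VN F → ZMod 2) :
    (∑ v : VN F, if adj F v (Sum.inl ()) then x v else 0)
      = x (Sum.inl ()) + ∑ j : F, x (Sum.inr (Sum.inl j)) := by
  rw [Fintype.sum_sum_type, Fintype.sum_sum_type, Fintype.sum_prod_type]
  simp [adj]

private lemma sumB (x : VN F → ZMod 2) (k : F) :
    (∑ v : VN F, if adj F v (Sum.inr (Sum.inl k)) then x v else 0)
      = x (Sum.inl ()) + ∑ j : F, x (Sum.inr (Sum.inr (k, j))) := by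
  rw [Fintype.sum_sum_type, Fintype.sum_sum_type, Fintype.sum_prod_type]
  simp only [adj, if_true, if_false, ↓reduceIte, Finset.sum_const_zero, add_zero, zero_add,
    Finset.sum_const, smul_zero]
  congr 1
  · simp
  have h2 : ∀ i : F, (∑ j : F, if k = i then x (Sum.inr (Sum.inr (i, j))) else 0)
      = if k = i then ∑ j : F, x (Sum.inr (Sum.inr (i, j))) else 0 := fun i => by
    split <;> simp
  erw [Finset.sum_congr rfl (fun i _ => h2 i), Finset.sum_ite_eq, if_pos (Finset.mem_univ k)]

private lemma sumC (x : VN F → ZMod 2) (a b : F) :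
    (∑ v : VN F, if adj F v (Sum.inr (Sum.inr (a, b))) then x v else 0)
      = x (Sum.inr (Sum.inl a)) + ∑ i : F, x (Sum.inr (Sum.inr (i, b - i * a))) := by
  rw [Fintype.sum_sum_type, Fintype.sum_sum_type, Fintype.sum_prod_type]
  simp only [adj, if_false, ↓reduceIte, Finset.sum_const_zero, zero_add]
  congr 1
  · erw [Finset.sum_ite_eq, if_pos (Finset.mem_univ a)]
  have h2 : ∀ i : F, (∑ j : F, if b = j + i * a then x (Sum.inr (Sum.inr (i, j))) else 0)
      = x (Sum.inr (Sum.inr (i, b - i * a))) := fun i => by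
    have hc : ∀ j : F, (b = j + i * a) ↔ (b - i * a = j) := fun j => sub_eq_iff_eq_add.symm
    simp only [hc]
    rw [Finset.sum_ite_eq, if_pos (Finset.mem_univ _)]
  exact Finset.sum_congr rfl (fun i _ => h2 i)

end Aux

theorem stmt_12 (p s : ℕ) (hp : p.Prime) (hodd : p ≠ 2) (hs : 0 < s)
    (F : Type*) [Field F] [Fintype F] (hF : Fintype.card F = p ^ s) :
    -- the binary code of P(p,s) consists exactly of the zero vector and the all-ones vector
    (∀ x : TypeII3.VN F → ZMod 2,
      TypeII3.InCode F (ZMod 2) x ↔ (x = 0 ∨ x = fun _ => 1)) ∧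
    -- it is a repetition code of length n = q² + q + 1
    Nat.card (TypeII3.VN F) = (p ^ s) ^ 2 + p ^ s + 1 := by
  have hqodd : Odd (Fintype.card F) := by
    rw [hF]; exact (hp.odd_of_ne_two hodd).pow
  have hq1 : ((Fintype.card F : ℕ) : ZMod 2) = 1 := by
    obtain ⟨k, hk⟩ := hqodd
    rw [hk]; push_cast
    rw [show ((2 : ZMod 2)) = 0 from rfl]
    ring
  have hsumconst : ∀ c : ZMod 2, (∑ _j : F, c) = c := fun c => by
    rw [Finset.sum_const, Finset.card_univ, nsmul_eq_mul, hq1, one_mul]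
  have htwo : ∀ a : ZMod 2, a + a = 0 := by decide
  have hadd : ∀ a b : ZMod 2, a + b = 0 ↔ a = b := by decide
  constructor
  · intro x
    constructor
    · intro h
      -- basic constraint equations
      have E1 : x (Sum.inl ()) + ∑ j : F, x (Sum.inr (Sum.inl j)) = 0 := by
        rw [← sumA]; exact h _
      have E2 : ∀ k : F, x (Sum.inl ()) + ∑ j : F, x (Sum.inr (Sum.inr (k, j))) = 0 := fun k => by
        rw [← sumB]; exact h _
      have E3 : ∀ a b : F,
          x (Sum.inr (Sum.inl a)) + ∑ i : F, x (Sum.inr (Sum.inr (i, b - i * a))) = 0 :=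
        fun a b => by rw [← sumC]; exact h _
      -- every `u a` equals the total sum `S` of the `v` coordinates
      have hre : ∀ (i c : F), (∑ b : F, x (Sum.inr (Sum.inr (i, b - c))))
          = ∑ j : F, x (Sum.inr (Sum.inr (i, j))) := fun i c =>
        Fintype.sum_equiv (Equiv.subRight c) _ _ (fun b => rfl)
      have hu : ∀ a : F, x (Sum.inr (Sum.inl a))
          = ∑ i : F, ∑ j : F, x (Sum.inr (Sum.inr (i, j))) := by
        intro a
        have h1 : (∑ b : F, (x (Sum.inr (Sum.inl a))
            + ∑ i : F, x (Sum.inr (Sum.inr (i, b - i * a))))) = 0 := by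
          simp only [E3, Finset.sum_const_zero]
        rw [Finset.sum_add_distrib, hsumconst, Finset.sum_comm] at h1
        rw [Finset.sum_congr rfl (fun i _ => hre i (i * a))] at h1
        exact (hadd _ _).mp h1
      -- the root equals `S` too
      have hrS : x (Sum.inl ()) = ∑ i : F, ∑ j : F, x (Sum.inr (Sum.inr (i, j))) := by
        have h1 : (∑ j : F, x (Sum.inr (Sum.inl j)))
            = ∑ i : F, ∑ j : F, x (Sum.inr (Sum.inr (i, j))) := by
          rw [Finset.sum_congr rfl (fun j _ => hu j), hsumconst]
        rw [h1] at E1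
        exact (hadd _ _).mp E1
      -- row sums equal r
      have hrow : ∀ i : F, (∑ j : F, x (Sum.inr (Sum.inr (i, j)))) = x (Sum.inl ()) :=
        fun i => ((hadd _ _).mp (E2 i)).symm
      -- each v (i₀, j₀) equals r
      have hv : ∀ i₀ j₀ : F, x (Sum.inr (Sum.inr (i₀, j₀))) = x (Sum.inl ()) := by
        intro i₀ j₀
        have hcol : ∀ a : F,
            (∑ i : F, x (Sum.inr (Sum.inr (i, (j₀ + i₀ * a) - i * a)))) = x (Sum.inl ()) := by
          intro a
          have h1 := E3 a (j₀ + i₀ * a)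
          rw [hu a, ← hrS] at h1
          exact ((hadd _ _).mp h1).symm
        have hT : (∑ a : F, ∑ i : F, x (Sum.inr (Sum.inr (i, (j₀ + i₀ * a) - i * a))))
            = x (Sum.inl ()) := by
          rw [Finset.sum_congr rfl (fun a _ => hcol a), hsumconst]
        rw [Finset.sum_comm] at hT
        have hterm : ∀ i : F, (∑ a : F, x (Sum.inr (Sum.inr (i, (j₀ + i₀ * a) - i * a))))
            = (if i = i₀ then x (Sum.inr (Sum.inr (i₀, j₀))) + x (Sum.inl ()) else 0)
              + x (Sum.inl ()) := by
          intro i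
          by_cases hi : i = i₀
          · rw [hi, if_pos rfl]
            have he : ∀ a : F, (j₀ + i₀ * a) - i₀ * a = j₀ := fun a => by ring
            simp only [he, hsumconst]
            rw [add_assoc, htwo, add_zero]
          · rw [if_neg hi, zero_add]
            have hc : i₀ - i ≠ 0 := sub_ne_zero.mpr (Ne.symm hi)
            have he : ∀ a : F, (j₀ + i₀ * a) - i * a = (i₀ - i) * a + j₀ := fun a => by ring
            simp only [he]
            rw [show (∑ a : F, x (Sum.inr (Sum.inr (i, (i₀ - i) * a + j₀))))
                = ∑ j : F, x (Sum.inr (Sum.inr (i, j))) from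
              Fintype.sum_equiv ((Equiv.mulLeft₀ (i₀ - i) hc).trans (Equiv.addRight j₀)) _ _
                (fun a => rfl)]
            exact hrow i
        rw [Finset.sum_congr rfl (fun i _ => hterm i), Finset.sum_add_distrib, hsumconst,
          Finset.sum_ite_eq', if_pos (Finset.mem_univ i₀)] at hT
        -- hT : (vP + r) + r = r
        have h2 : x (Sum.inr (Sum.inr (i₀, j₀))) + (x (Sum.inl ()) + x (Sum.inl ()))
            = x (Sum.inl ()) + 0 := by
          rw [← add_assoc, hT, add_zero]
        rw [htwo] at h2
        simpa using h2
      -- all coordinates equal r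
      have hx : ∀ v : TypeII3.VN F, x v = x (Sum.inl ()) := by
        rintro (⟨⟩ | (j | ⟨i, j⟩))
        · rfl
        · rw [hu j, ← hrS]
        · exact hv i j
      rcases (show ∀ a : ZMod 2, a = 0 ∨ a = 1 by decide) (x (Sum.inl ())) with h0 | h1
      · left; funext v; rw [hx v, h0]; rfl
      · right; funext v; rw [hx v, h1]
    · rintro (rfl | rfl)
      · intro c; simp
      · rintro (⟨⟩ | (k | ⟨a, b⟩))
        · rw [sumA, hsumconst]; exact htwo 1
        · rw [sumB, hsumconst]; exact htwo 1
        · rw [sumC, hsumconst]; exact htwo 1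
  · rw [Nat.card_eq_fintype_card]
    simp only [Fintype.card_sum, Fintype.card_prod, Fintype.card_unit, hF]
    ring
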